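/- arXiv:1003.0219 — 2 statements merged into one kernel-verified Lean document; each statement's English description precedes it below -/
import Mathlib

section
/- Let x* ∈ ℝ^N with at most K nonzero entries, and let A be an M × N random matrix with i.i.d. absolutely continuous entries, where K < M < N. Let y = A x*. Then with probability 1, x* is the unique vector x satisfying y = A x and ‖x‖_0 < M. -/
open MeasureTheory Finset

noncomputable def gramDet {ι : Type*} [Fintype ι] [DecidableEq ι] {M : ℕ}
    (f : ι → (Fin M → ℝ)) : ℝ :=
  Matrix.det (Matrix.of fun a b => ∑ m, f a m * f b m)

lemma gram_key {ι : Type*} [Fintype ι] {M : ℕ} (f : ι → (Fin M → ℝ)) (c : ι → ℝ) :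
    ∑ m, (∑ b, c b * f b m) ^ 2 = ∑ a, c a * ∑ b, (∑ m, f a m * f b m) * c b := by
  have lhs : ∑ m, (∑ b, c b * f b m) ^ 2
      = ∑ m, ∑ a, ∑ b, c a * c b * f a m * f b m := by
    refine Finset.sum_congr rfl fun m _ => ?_
    rw [sq, Finset.sum_mul_sum]
    exact Finset.sum_congr rfl fun a _ => Finset.sum_congr rfl fun b _ => by ring
  have rhs : ∑ a, c a * ∑ b, (∑ m, f a m * f b m) * c b
      = ∑ a, ∑ b, ∑ m, c a * c b * f a m * f b m := by
    refine Finset.sum_congr rfl fun a _ => ?_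
    rw [Finset.mul_sum]
    refine Finset.sum_congr rfl fun b _ => ?_
    rw [Finset.sum_mul, Finset.mul_sum]
    exact Finset.sum_congr rfl fun m _ => by ring
  rw [lhs, rhs]
  rw [Finset.sum_comm]
  exact Finset.sum_congr rfl fun a _ => Finset.sum_comm

lemma gramDet_ne_zero_iff {ι : Type*} [Fintype ι] [DecidableEq ι] {M : ℕ}
    (f : ι → (Fin M → ℝ)) : gramDet f ≠ 0 ↔ LinearIndependent ℝ f := by
  rw [gramDet, ← not_iff_not, not_not, ← Matrix.exists_mulVec_eq_zero_iff,
    Fintype.not_linearIndependent_iff]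
  constructor
  · rintro ⟨c, hc0, hc⟩
    have h1 : ∀ a, ∑ b, (∑ m, f a m * f b m) * c b = 0 := by
      intro a
      have := congrFun hc a
      simpa [Matrix.mulVec, dotProduct] using this
    refine ⟨c, ?_, Function.ne_iff.mp hc0⟩
    have key : ∑ m, (∑ b, c b * f b m) ^ 2 = 0 := by
      rw [gram_key f c]
      exact Finset.sum_eq_zero fun a _ => by rw [h1 a, mul_zero]
    have hz : ∀ m ∈ Finset.univ, (∑ b, c b * f b m) ^ 2 = 0 :=
      (Finset.sum_eq_zero_iff_of_nonneg fun m _ => sq_nonneg _).mp key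
    funext mm
    have := sq_eq_zero_iff.mp (hz mm (Finset.mem_univ mm))
    simpa [Finset.sum_apply, smul_eq_mul] using this
  · rintro ⟨g, hg, i0, hi0⟩
    refine ⟨g, Function.ne_iff.mpr ⟨i0, hi0⟩, ?_⟩
    funext a
    have hgm : ∀ m, ∑ b, g b * f b m = 0 := by
      intro m
      have := congrFun hg m
      simpa [Finset.sum_apply, smul_eq_mul] using this
    simp only [Matrix.mulVec, dotProduct, Matrix.of_apply, Pi.zero_apply]
    calc ∑ b, (∑ m, f a m * f b m) * g b
        = ∑ b, ∑ m, f a m * (g b * f b m) := by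
          refine Finset.sum_congr rfl fun b _ => ?_
          rw [Finset.sum_mul]
          exact Finset.sum_congr rfl fun m _ => by ring
      _ = ∑ m, f a m * ∑ b, g b * f b m := by
          rw [Finset.sum_comm]
          exact Finset.sum_congr rfl fun m _ => (Finset.mul_sum _ _ _).symm
      _ = 0 := by simp [hgm]

lemma not_linearIndependent_option {ι : Type*} [Fintype ι] {M : ℕ}
    (f : Option ι → (Fin M → ℝ)) (d : ι → ℝ)
    (h : f none = ∑ i, d i • f (some i)) : ¬ LinearIndependent ℝ f := by
  rw [Fintype.not_linearIndependent_iff]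
  refine ⟨fun o => Option.elim o (-1) d, ?_, ⟨none, by norm_num⟩⟩
  rw [Fintype.sum_option]
  simp only [Option.elim]
  rw [neg_one_smul, h]
  abel

lemma mem_span_of_dep {ι : Type*} [Fintype ι] {M : ℕ}
    (f : Option ι → (Fin M → ℝ)) (hdep : ¬ LinearIndependent ℝ f)
    (hind : LinearIndependent ℝ (f ∘ some)) :
    f none ∈ Submodule.span ℝ (Set.range (f ∘ some)) := by
  obtain ⟨g, hg, o, ho⟩ := Fintype.not_linearIndependent_iff.mp hdep
  rw [Fintype.sum_option] at hg
  have hgnone : g none ≠ 0 := by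
    intro h0
    rcases o with _ | i
    · exact ho h0
    · rw [h0, zero_smul, zero_add] at hg
      exact ho (Fintype.linearIndependent_iff.mp hind (fun i => g (some i)) hg i)
  have h2 : g none • f none = ∑ i, (-(g (some i))) • f (some i) := by
    have h3 := eq_neg_of_add_eq_zero_left hg
    rw [h3, ← Finset.sum_neg_distrib]
    exact Finset.sum_congr rfl fun i _ => (neg_smul _ _).symm
  have : f none = ∑ i, (-(g (some i)) / g none) • (f ∘ some) i := by
    calc f none = (g none)⁻¹ • (g none • f none) := by rw [inv_smul_smul₀ hgnone]
    _ = (g none)⁻¹ • ∑ i, (-(g (some i))) • f (some i) := by rw [h2]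
    _ = ∑ i, (-(g (some i)) / g none) • (f ∘ some) i := by
        rw [Finset.smul_sum]
        refine Finset.sum_congr rfl fun i _ => ?_
        rw [smul_smul, div_eq_inv_mul]
        rfl
  rw [this]
  exact Submodule.sum_mem _ fun i _ =>
    Submodule.smul_mem _ _ (Submodule.subset_span (Set.mem_range_self i))

lemma pi_fin_ac {μ : Measure ℝ} [SigmaFinite μ] (hac : μ ≪ volume) :
    ∀ n : ℕ, (Measure.pi fun _ : Fin n => μ) ≪ (volume : Measure (Fin n → ℝ)) := by
  intro n
  induction n with
  | zero =>
      rw [show (volume : Measure (Fin 0 → ℝ)) = Measure.pi fun _ : Fin 0 => volume from rfl]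
      rw [Measure.pi_of_empty (fun _ : Fin 0 => μ), Measure.pi_of_empty (fun _ : Fin 0 => volume)]
  | succ n ih =>
      rw [show (volume : Measure (Fin (n+1) → ℝ)) = Measure.pi fun _ : Fin (n+1) => volume from rfl]
      refine Measure.AbsolutelyContinuous.mk fun s hs h0 => ?_
      set e := MeasurableEquiv.piFinSuccAbove (fun _ : Fin (n+1) => ℝ) 0 with he
      have h1 := measurePreserving_piFinSuccAbove (fun _ : Fin (n+1) => μ) 0
      have h2 := measurePreserving_piFinSuccAbove (fun _ : Fin (n+1) => (volume : Measure ℝ)) 0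
      have hts : e ⁻¹' (e.symm ⁻¹' s) = s := by
        rw [← Set.preimage_comp]; simp
      have hmt : MeasurableSet (e.symm ⁻¹' s) := e.symm.measurable hs
      have hv : (volume.prod (Measure.pi fun _ : Fin n => volume)) (e.symm ⁻¹' s) = 0 := by
        rw [← h2.measure_preimage hmt.nullMeasurableSet, hts]
        exact h0
      have hμ : (μ.prod (Measure.pi fun _ : Fin n => μ)) (e.symm ⁻¹' s) = 0 := by
        have hvol : (volume : Measure (Fin n → ℝ)) = Measure.pi fun _ : Fin n => volume := rfl
        exact (hac.prod (hvol ▸ ih)) hv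
      rw [← h1.measure_preimage hmt.nullMeasurableSet, hts] at hμ
      exact hμ

lemma span_ne_top {M : ℕ} {ι : Type*} [Fintype ι] [DecidableEq ι] (hcard : Fintype.card ι < M)
    (f : ι → (Fin M → ℝ)) : Submodule.span ℝ (Set.range f) ≠ ⊤ := by
  intro htop
  have h1 : Module.finrank ℝ (Submodule.span ℝ (Set.range f)) ≤ (Set.range f).toFinset.card :=
    finrank_span_le_card _
  have h2 : (Set.range f).toFinset.card ≤ Fintype.card ι := by
    rw [Set.toFinset_range]
    exact (Finset.card_image_le).trans (by simp)
  have h3 : Module.finrank ℝ (Fin M → ℝ) = M := by simp [Module.finrank_pi]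
  rw [htop] at h1
  have h4 := finrank_top ℝ (Fin M → ℝ)
  rw [h4, h3] at h1
  omega

lemma coset_null {M : ℕ} (ν : Measure (Fin M → ℝ)) (hν : ν ≪ volume)
    (w : Fin M → ℝ) (W : Submodule ℝ (Fin M → ℝ)) (hW : W ≠ ⊤) :
    ν {u : Fin M → ℝ | u - w ∈ W} = 0 := by
  have hset : {u : Fin M → ℝ | u - w ∈ W} = (AffineSubspace.mk' w W : Set (Fin M → ℝ)) := by
    ext u
    rw [Set.mem_setOf_eq, SetLike.mem_coe, AffineSubspace.mem_mk']
    rfl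
  rw [hset]
  refine hν ?_
  refine Measure.addHaar_affineSubspace volume _ fun htop => ?_
  have := AffineSubspace.direction_mk' w W
  rw [htop, AffineSubspace.direction_top] at this
  exact hW this.symm

lemma measurePreserving_piCongrRight' {ι : Type*} [Fintype ι] {α β : ι → Type*}
    [∀ i, MeasurableSpace (α i)] [∀ i, MeasurableSpace (β i)]
    (e : ∀ i, α i ≃ᵐ β i) (μ : ∀ i, Measure (α i)) (ν : ∀ i, Measure (β i))
    [∀ i, SigmaFinite (μ i)] [∀ i, SigmaFinite (ν i)] (h : ∀ i, MeasurePreserving (e i) (μ i) (ν i)) :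
    MeasurePreserving (MeasurableEquiv.piCongrRight e) (Measure.pi μ) (Measure.pi ν) := by
  refine ⟨(MeasurableEquiv.piCongrRight e).measurable, ?_⟩
  refine (Measure.pi_eq fun s hs => ?_).symm
  have hpre : (MeasurableEquiv.piCongrRight e) ⁻¹' (Set.univ.pi s)
      = Set.univ.pi fun i => (e i) ⁻¹' (s i) := by
    ext x
    simp [MeasurableEquiv.piCongrRight, Equiv.piCongrRight, Set.mem_pi]
  rw [Measure.map_apply (MeasurableEquiv.piCongrRight e).measurable
    (MeasurableSet.univ_pi hs), hpre, Measure.pi_pi]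
  exact Finset.prod_congr rfl fun i _ =>
    ((h i).measure_preimage ((hs i).nullMeasurableSet)).trans rfl

section col
variable {M N : ℕ}

/-- Reassemble a matrix from (other columns, column j). -/
def colPaste (j : Fin N) (p : (Fin M → {i : Fin N // ¬ i = j} → ℝ) × (Fin M → ℝ)) :
    Fin M → Fin N → ℝ := fun m i => if h : i = j then p.2 m else p.1 m ⟨i, h⟩

lemma measurable_colPaste (j : Fin N) : Measurable (colPaste (M := M) j) := by
  refine measurable_pi_lambda _ fun m => measurable_pi_lambda _ fun i => ?_
  by_cases h : i = j
  · simp only [colPaste, dif_pos h]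
    exact (measurable_pi_apply m).comp measurable_snd
  · simp only [colPaste, dif_neg h]
    exact ((measurable_pi_apply (⟨i, h⟩ : {i : Fin N // ¬ i = j})).comp
      ((measurable_pi_apply m).comp measurable_fst))

lemma fubini_column (μ : Measure ℝ) [IsProbabilityMeasure μ] (j : Fin N)
    (D : Set (Fin M → Fin N → ℝ)) (hD : MeasurableSet D)
    (hslice : ∀ R : Fin M → {i : Fin N // ¬ i = j} → ℝ,
      (Measure.pi fun _ : Fin M => μ) {u : Fin M → ℝ | colPaste j (R, u) ∈ D} = 0) :
    (Measure.pi fun _ : Fin M => Measure.pi fun _ : Fin N => μ) D = 0 := by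
  letI : Unique {i : Fin N // i = j} := ⟨⟨⟨j, rfl⟩⟩, fun a => Subtype.ext a.2⟩
  set eRow : (Fin N → ℝ) ≃ᵐ ℝ × ({i : Fin N // ¬ i = j} → ℝ) :=
    (MeasurableEquiv.piEquivPiSubtypeProd (fun _ : Fin N => ℝ) (fun i => i = j)).trans
      ((MeasurableEquiv.funUnique {i : Fin N // i = j} ℝ).prodCongr (MeasurableEquiv.refl _))
    with heRow
  have hRow : MeasurePreserving eRow (Measure.pi fun _ : Fin N => μ)
      (μ.prod (Measure.pi fun _ : {i : Fin N // ¬ i = j} => μ)) := by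
    have h1 := measurePreserving_piEquivPiSubtypeProd (fun _ : Fin N => μ) (fun i => i = j)
    have h2 := (measurePreserving_funUnique μ {i : Fin N // i = j}).prod
      (MeasurePreserving.id (Measure.pi fun _ : {i : Fin N // ¬ i = j} => μ))
    have hfin : (Subtype.fintype (fun i : Fin N => i = j)) = Unique.fintype :=
      Subsingleton.elim _ _
    rw [← hfin] at h2
    exact h2.comp h1
  set e4 := MeasurableEquiv.arrowProdEquivProdArrow ℝ ({i : Fin N // ¬ i = j} → ℝ) (Fin M)
  have h4 := measurePreserving_arrowProdEquivProdArrow ℝ ({i : Fin N // ¬ i = j} → ℝ) (Fin M)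
    (fun _ => μ) (fun _ => Measure.pi fun _ : {i : Fin N // ¬ i = j} => μ)
  have hpc := measurePreserving_piCongrRight' (fun _ : Fin M => eRow)
    (fun _ => Measure.pi fun _ : Fin N => μ)
    (fun _ => μ.prod (Measure.pi fun _ : {i : Fin N // ¬ i = j} => μ)) (fun _ => hRow)
  set Φ : (Fin M → Fin N → ℝ) →
      (Fin M → {i : Fin N // ¬ i = j} → ℝ) × (Fin M → ℝ) :=
    Prod.swap ∘ ⇑e4 ∘ ⇑(MeasurableEquiv.piCongrRight (fun _ : Fin M => eRow)) with hΦdef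
  have hΦ : MeasurePreserving Φ
      (Measure.pi fun _ : Fin M => Measure.pi fun _ : Fin N => μ)
      ((Measure.pi fun _ : Fin M => Measure.pi fun _ : {i : Fin N // ¬ i = j} => μ).prod
        (Measure.pi fun _ : Fin M => μ)) :=
    (Measure.measurePreserving_swap).comp (h4.comp hpc)
  have hΦapp : ∀ A, colPaste j (Φ A) = A := by
    intro A
    funext m i
    by_cases h : i = j
    · subst h
      simp only [colPaste]
      rw [dif_pos trivial]
      rfl
    · simp only [colPaste, dif_neg h]
      rfl
  set S := (colPaste j) ⁻¹' D with hS
  have hSm : MeasurableSet S := measurable_colPaste j hD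
  have hpre : Φ ⁻¹' S = D := by
    ext A
    simp only [Set.mem_preimage, hS, hΦapp A]
  rw [← hpre, hΦ.measure_preimage hSm.nullMeasurableSet]
  rw [Measure.measure_prod_null hSm]
  exact Filter.Eventually.of_forall fun R => hslice R
end col

section defs
variable {M N : ℕ}

def col (A : Fin M → Fin N → ℝ) (i : Fin N) : Fin M → ℝ := fun m => A m i

noncomputable def famD (j : Fin N) (T : Finset (Fin N)) (b : Fin N → ℝ)
    (A : Fin M → Fin N → ℝ) : Option {i // i ∈ T} → (Fin M → ℝ) :=
  fun o => Option.elim o (col A j - ∑ i ∈ Finset.univ.erase j, b i • col A i)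
    (fun i => col A i.1)

def DSet (j : Fin N) (T : Finset (Fin N)) (b : Fin N → ℝ) : Set (Fin M → Fin N → ℝ) :=
  {A | gramDet (famD j T b A) = 0}

def subDet (T : Finset (Fin N)) : Set (Fin M → Fin N → ℝ) :=
  {A | gramDet (fun i : {i // i ∈ T} => col A i.1) = 0}

lemma continuous_famD_entry (j : Fin N) (T : Finset (Fin N)) (b : Fin N → ℝ)
    (a : Option {i // i ∈ T}) (m : Fin M) :
    Continuous fun A : Fin M → Fin N → ℝ => famD j T b A a m := by
  cases a with
  | none =>
      simp only [famD, Option.elim, Pi.sub_apply, Finset.sum_apply, Pi.smul_apply, smul_eq_mul,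
        col]
      fun_prop
  | some i =>
      simp only [famD, Option.elim, col]
      exact (continuous_apply i.1).comp (continuous_apply m)

lemma measurable_DSet (j : Fin N) (T : Finset (Fin N)) (b : Fin N → ℝ) :
    MeasurableSet (DSet (M := M) j T b) := by
  have hc : Continuous fun A : Fin M → Fin N → ℝ => gramDet (famD j T b A) := by
    refine Continuous.matrix_det (continuous_matrix fun a c => ?_)
    simp only [Matrix.of_apply]
    exact continuous_finset_sum _ fun m _ =>
      (continuous_famD_entry j T b a m).mul (continuous_famD_entry j T b c m)
  exact (isClosed_singleton.preimage hc).measurableSet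

lemma measurable_subDet (T : Finset (Fin N)) :
    MeasurableSet (subDet (M := M) T) := by
  have hc : Continuous fun A : Fin M → Fin N → ℝ =>
      gramDet (fun i : {i // i ∈ T} => col A i.1) := by
    refine Continuous.matrix_det (continuous_matrix fun a c => ?_)
    simp only [Matrix.of_apply]
    exact continuous_finset_sum _ fun m _ =>
      by simp only [col]; fun_prop
  exact (isClosed_singleton.preimage hc).measurableSet
end defs



lemma eliminate_combo {γ : Type*} {M' : ℕ} {T : Finset γ} {v : Fin M' → ℝ}
    {w : γ → (Fin M' → ℝ)} {c : γ → ℝ} {cj : ℝ} (hcj : cj ≠ 0)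
    (h : cj • v + ∑ i ∈ T, c i • w i = 0) :
    v = ∑ i ∈ T, (-(c i) / cj) • w i := by
  have h2 : cj • v = ∑ i ∈ T, (-(c i)) • w i := by
    have h3 := eq_neg_of_add_eq_zero_left h
    rw [h3, ← Finset.sum_neg_distrib]
    exact Finset.sum_congr rfl fun i _ => (neg_smul _ _).symm
  calc v = cj⁻¹ • (cj • v) := by rw [inv_smul_smul₀ hcj]
    _ = cj⁻¹ • ∑ i ∈ T, (-(c i)) • w i := by rw [h2]
    _ = ∑ i ∈ T, (-(c i) / cj) • w i := by
        rw [Finset.smul_sum]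
        refine Finset.sum_congr rfl fun i _ => ?_
        rw [smul_smul, div_eq_inv_mul]


theorem DSet_null {M N : ℕ} (μ : Measure ℝ) [IsProbabilityMeasure μ] (hac : μ ≪ volume) :
    ∀ (t : ℕ) (T : Finset (Fin N)) (_ : T.card = t) (_ : T.card < M) (j : Fin N)
      (_ : j ∉ T) (b : Fin N → ℝ),
    (Measure.pi fun _ : Fin M => Measure.pi fun _ : Fin N => μ) (DSet j T b) = 0 := by
  intro t
  induction t using Nat.strong_induction_on with
  | _ t ih =>
    intro T hTt hTM j hj b
    have hsub : (Measure.pi fun _ : Fin M => Measure.pi fun _ : Fin N => μ) (subDet (M := M) T) = 0 := by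
      rcases Nat.eq_zero_or_pos t with ht0 | htpos
      · -- T is empty
        subst ht0
        have hTe : T = ∅ := Finset.card_eq_zero.mp hTt
        subst hTe
        have : (subDet (M := M) (∅ : Finset (Fin N))) = ∅ := by
          ext A
          simp only [subDet, Set.mem_setOf_eq, Set.mem_empty_iff_false, iff_false]
          haveI : IsEmpty {i : Fin N // i ∈ (∅ : Finset (Fin N))} :=
            ⟨fun i => absurd i.2 (Finset.notMem_empty _)⟩
          rw [gramDet, Matrix.det_isEmpty]
          norm_num
        rw [this]
        simp
      · -- T nonempty: contained in union of smaller DSets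
        have hsubset : subDet (M := M) T ⊆ ⋃ j' ∈ T, DSet j' (T.erase j') 0 := by
          intro A hA
          have hdep : ¬ LinearIndependent ℝ (fun i : {i // i ∈ T} => col A i.1) := by
            intro hLI
            exact (gramDet_ne_zero_iff _).mpr hLI hA
          obtain ⟨c, hc, i0, hi0⟩ := Fintype.not_linearIndependent_iff.mp hdep
          classical
          set c' : Fin N → ℝ := fun i => if h : i ∈ T then c ⟨i, h⟩ else 0 with hc'
          have hcsum : ∑ i ∈ T, c' i • col A i = 0 := by
            rw [← Finset.sum_attach T (fun i => c' i • col A i)]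
            rw [← hc]
            refine Finset.sum_congr rfl fun i _ => ?_
            simp [hc', i.2]
          have hc'j : c' i0.1 ≠ 0 := by simpa [hc', i0.2] using hi0
          have hj'mem : i0.1 ∈ T := i0.2
          have hcol : col A i0.1 = ∑ i ∈ T.erase i0.1, (-(c' i) / c' i0.1) • col A i := by
            have hsplit : c' i0.1 • col A i0.1 + ∑ i ∈ T.erase i0.1, c' i • col A i = 0 := by
              rw [Finset.add_sum_erase T (fun i => c' i • col A i) hj'mem]; exact hcsum
            have h2 : c' i0.1 • col A i0.1 = ∑ i ∈ T.erase i0.1, (-(c' i)) • col A i := by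
              have h3 := eq_neg_of_add_eq_zero_left hsplit
              rw [h3, ← Finset.sum_neg_distrib]
              exact Finset.sum_congr rfl fun i _ => (neg_smul _ _).symm
            calc col A i0.1 = (c' i0.1)⁻¹ • (c' i0.1 • col A i0.1) := by
                  rw [inv_smul_smul₀ hc'j]
              _ = (c' i0.1)⁻¹ • ∑ i ∈ T.erase i0.1, (-(c' i)) • col A i := by rw [h2]
              _ = ∑ i ∈ T.erase i0.1, (-(c' i) / c' i0.1) • col A i := by
                  rw [Finset.smul_sum]
                  refine Finset.sum_congr rfl fun i _ => ?_
                  rw [smul_smul, div_eq_inv_mul]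
          refine Set.mem_biUnion hj'mem ?_
          show gramDet (famD i0.1 (T.erase i0.1) 0 A) = 0
          by_contra hne
          refine not_linearIndependent_option (famD i0.1 (T.erase i0.1) 0 A)
            (fun i => -(c' i.1) / c' i0.1) ?_ ((gramDet_ne_zero_iff _).mp hne)
          have hnone : famD i0.1 (T.erase i0.1) 0 A none = col A i0.1 := by
            simp [famD]
          rw [hnone, hcol]
          rw [← Finset.sum_attach (T.erase i0.1) (fun i => (-(c' i) / c' i0.1) • col A i)]
          rfl
        refine measure_mono_null hsubset ?_
        refine (measure_biUnion_null_iff T.countable_toSet).mpr fun j' hj' => ?_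
        have hcard : (T.erase j').card = t - 1 := by
          rw [Finset.card_erase_of_mem hj', hTt]
        exact ih (t - 1) (by omega) (T.erase j') hcard
          (by rw [hcard]; omega) j' (Finset.notMem_erase _ _) 0
    have hdiff : (Measure.pi fun _ : Fin M => Measure.pi fun _ : Fin N => μ)
        (DSet j T b \ subDet (M := M) T) = 0 := by
      refine fubini_column μ j _ ((measurable_DSet j T b).diff (measurable_subDet T))
        fun R => ?_
      set A0 := colPaste j (R, (0 : Fin M → ℝ)) with hA0
      set ρ : {i // i ∈ T} → (Fin M → ℝ) := fun i => col A0 i.1 with hρ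
      set w : Fin M → ℝ := ∑ i ∈ Finset.univ.erase j, b i • col A0 i with hw
      have hcolu : ∀ (u : Fin M → ℝ) (i : Fin N), ¬ i = j →
          col (colPaste j (R, u)) i = col A0 i := by
        intro u i h
        funext m
        simp [col, colPaste, hA0, dif_neg h]
      have hcolj : ∀ u : Fin M → ℝ, col (colPaste j (R, u)) j = u := by
        intro u
        funext m
        simp [col, colPaste]
      have hWne : Submodule.span ℝ (Set.range ρ) ≠ ⊤ := by
        refine span_ne_top ?_ ρ
        rw [Fintype.card_coe]
        exact hTM
      refine measure_mono_null (fun u hu => ?_)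
        (coset_null _ (pi_fin_ac hac M) w (Submodule.span ℝ (Set.range ρ)) hWne)
      obtain ⟨hu1, hu2⟩ := hu
      set A := colPaste j (R, u) with hA
      have hsubfam : (fun i : {i // i ∈ T} => col A i.1) = ρ := by
        funext i
        exact hcolu u i.1 (fun h => hj (h ▸ i.2))
      have hind : LinearIndependent ℝ ρ := by
        rw [← hsubfam]
        by_contra hnot
        exact hu2 (by
          show gramDet (fun i : {i // i ∈ T} => col A i.1) = 0
          by_contra hne
          exact hnot ((gramDet_ne_zero_iff _).mp hne))
      have hdep : ¬ LinearIndependent ℝ (famD j T b A) := by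
        intro hLI
        exact (gramDet_ne_zero_iff _).mpr hLI hu1
      have hfam_some : famD j T b A ∘ some = ρ := by
        funext i
        exact hcolu u i.1 (fun h => hj (h ▸ i.2))
      have hfam_none : famD j T b A none = u - w := by
        show col A j - ∑ i ∈ Finset.univ.erase j, b i • col A i = u - w
        rw [hcolj u, hw]
        congr 1
        refine Finset.sum_congr rfl fun i hi => ?_
        rw [hcolu u i (Finset.ne_of_mem_erase hi)]
      have hmem := mem_span_of_dep (famD j T b A) hdep (hfam_some ▸ hind)
      rw [hfam_none, hfam_some] at hmem
      exact hmem
    have hU : DSet (M := M) j T b ⊆ (DSet j T b \ subDet T) ∪ subDet T :=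
      fun A hA => (Set.mem_union _ _ _).mpr
        (by by_cases h : A ∈ subDet (M := M) T
            · exact Or.inr h
            · exact Or.inl ⟨hA, h⟩)
    refine le_antisymm ?_ zero_le
    calc (Measure.pi fun _ : Fin M => Measure.pi fun _ : Fin N => μ) (DSet j T b)
        ≤ (Measure.pi fun _ : Fin M => Measure.pi fun _ : Fin N => μ)
          ((DSet j T b \ subDet T) ∪ subDet T) := measure_mono hU
      _ ≤ _ + _ := measure_union_le _ _
      _ = 0 := by rw [hdiff, hsub, add_zero]



/-- The number of nonzero entries of a vector (the "ℓ₀ norm"). -/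
noncomputable def sparsity {n : ℕ} (x : Fin n → ℝ) : ℕ := (Finset.univ.filter fun i => x i ≠ 0).card

/-- For `x*` with at most `K < M` nonzero entries and a random `M × N`
matrix `A` (`M < N`) with i.i.d. absolutely continuous entries, with probability one
`x*` is the unique vector `x` with `A x = A x*` and fewer than `M` nonzero entries. -/
theorem stmt3 (M N K : ℕ) (hKM : K < M) (hMN : M < N)
    (μ : Measure ℝ) [IsProbabilityMeasure μ] (hac : μ ≪ volume)
    (xstar : Fin N → ℝ) (hx : sparsity xstar ≤ K) :
    (Measure.pi fun _ : Fin M => Measure.pi fun _ : Fin N => μ)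
      {A : Fin M → Fin N → ℝ | ∀ x : Fin N → ℝ,
        Matrix.mulVec (Matrix.of A) x = Matrix.mulVec (Matrix.of A) xstar →
        sparsity x < M → x = xstar} = 1 := by
  classical
  set P₀ := (Measure.pi fun _ : Fin M => Measure.pi fun _ : Fin N => μ) with hP₀
  set bco : Fin N → Fin N → ℝ := fun j i => -(xstar i) / (xstar j) with hbco
  set V : Fin N → Finset (Fin N) → Set (Fin M → Fin N → ℝ) := fun j T =>
    if T.card < M ∧ j ∉ T then DSet j T (bco j) ∪ DSet j T 0 else ∅ with hV
  set U : Set (Fin M → Fin N → ℝ) := ⋃ j : Fin N, ⋃ T : Finset (Fin N), V j T with hU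
  have hVm : ∀ j T, MeasurableSet (V j T) := by
    intro j T
    simp only [hV]
    split_ifs
    · exact (measurable_DSet j T (bco j)).union (measurable_DSet j T 0)
    · exact MeasurableSet.empty
  have hUm : MeasurableSet U :=
    MeasurableSet.iUnion fun j => MeasurableSet.iUnion fun T => hVm j T
  have hU0 : P₀ U = 0 := by
    refine measure_iUnion_null fun j => measure_iUnion_null fun T => ?_
    simp only [hV]
    split_ifs with h
    · exact measure_union_null
        (DSet_null μ hac T.card T rfl h.1 j h.2 (bco j))
        (DSet_null μ hac T.card T rfl h.1 j h.2 0)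
    · simp
  have hcompl : Uᶜ ⊆ {A : Fin M → Fin N → ℝ | ∀ x : Fin N → ℝ,
      Matrix.mulVec (Matrix.of A) x = Matrix.mulVec (Matrix.of A) xstar →
      sparsity x < M → x = xstar} := by
    intro A hA x hAx hsp
    by_contra hne
    apply hA
    have sumEq : ∀ m, ∑ i, A m i * x i = ∑ i, A m i * xstar i := by
      intro m
      simpa [Matrix.mulVec, dotProduct] using congrFun hAx m
    have colEq : ∑ i, x i • col A i = ∑ i, xstar i • col A i := by
      funext m
      simp only [Finset.sum_apply, Pi.smul_apply, smul_eq_mul, col]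
      calc ∑ i, x i * A m i = ∑ i, A m i * x i :=
            Finset.sum_congr rfl fun i _ => mul_comm _ _
        _ = ∑ i, A m i * xstar i := sumEq m
        _ = ∑ i, xstar i * A m i := Finset.sum_congr rfl fun i _ => mul_comm _ _
    set Tx : Finset (Fin N) := Finset.univ.filter (fun i => x i ≠ 0) with hTx
    have hTxcard : Tx.card < M := hsp
    have hmemTx : ∀ i, i ∈ Tx ↔ x i ≠ 0 := by
      intro i; simp [hTx]
    by_cases hScase : ∀ i, xstar i ≠ 0 → i ∈ Tx
    · -- Case 1 : support of xstar inside Tx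
      obtain ⟨j, hzj⟩ : ∃ j, x j - xstar j ≠ 0 := by
        by_contra hc
        push_neg at hc
        exact hne (funext fun i => by have := hc i; linarith [sub_eq_zero.mp (this)])
      have hjTx : j ∈ Tx := by
        rw [hmemTx]
        intro hxj
        rcases eq_or_ne (xstar j) 0 with h0 | h0
        · rw [hxj, h0, sub_zero] at hzj; exact hzj rfl
        · exact (hmemTx j).mp (hScase j h0) hxj
      set T := Tx.erase j with hT
      have hTcard : T.card < M := by
        rw [hT, Finset.card_erase_of_mem hjTx]
        omega
      have hjT : j ∉ T := Finset.notMem_erase _ _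
      have hzvan : ∀ i, i ∉ Tx → x i - xstar i = 0 := by
        intro i hi
        have hxi : x i = 0 := by
          by_contra hxi
          exact hi ((hmemTx i).mpr hxi)
        have hxsi : xstar i = 0 := by
          by_contra hxsi
          exact hi (hScase i hxsi)
        rw [hxi, hxsi, sub_zero]
      have hfull : ∑ i, (x i - xstar i) • col A i = 0 := by
        have : ∑ i, (x i - xstar i) • col A i
            = (∑ i, x i • col A i) - ∑ i, xstar i • col A i := by
          rw [← Finset.sum_sub_distrib]
          exact Finset.sum_congr rfl fun i _ => sub_smul _ _ _
        rw [this, colEq, sub_self]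
      have hsplit : (x j - xstar j) • col A j
          + ∑ i ∈ Finset.univ.erase j, (x i - xstar i) • col A i = 0 := by
        rw [Finset.add_sum_erase Finset.univ (fun i => (x i - xstar i) • col A i)
          (Finset.mem_univ j)]
        exact hfull
      have hTsum : ∑ i ∈ Finset.univ.erase j, (x i - xstar i) • col A i
          = ∑ i ∈ T, (x i - xstar i) • col A i := by
        refine (Finset.sum_subset ?_ ?_).symm
        · intro i hi
          exact Finset.mem_erase.mpr ⟨Finset.ne_of_mem_erase hi, Finset.mem_univ i⟩
        · intro i hi hiT
          by_cases hij : i = j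
          · exact absurd hij (Finset.ne_of_mem_erase hi)
          · have h1 : i ∉ Tx := fun hiTx => hiT (Finset.mem_erase.mpr ⟨hij, hiTx⟩)
            rw [hzvan i h1, zero_smul]
      have hsplit2 : (x j - xstar j) • col A j
          + ∑ i ∈ T, (x i - xstar i) • col A i = 0 := by
        rw [← hTsum]; exact hsplit
      have hcol := eliminate_combo hzj hsplit2
      refine Set.mem_iUnion.mpr ⟨j, Set.mem_iUnion.mpr ⟨T, ?_⟩⟩
      simp only [hV]
      rw [if_pos ⟨hTcard, hjT⟩]
      refine Or.inr ?_
      show gramDet (famD j T 0 A) = 0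
      by_contra hne2
      refine not_linearIndependent_option (famD j T 0 A)
        (fun i => -(x i.1 - xstar i.1) / (x j - xstar j)) ?_
        ((gramDet_ne_zero_iff _).mp hne2)
      have hnone : famD j T 0 A none = col A j := by simp [famD]
      rw [hnone, hcol,
        ← Finset.sum_attach T (fun i => (-(x i - xstar i) / (x j - xstar j)) • col A i)]
      rfl
    · -- Case 2 : some coordinate of xstar outside Tx
      push_neg at hScase
      obtain ⟨j, hxsj, hjTx⟩ := hScase
      refine Set.mem_iUnion.mpr ⟨j, Set.mem_iUnion.mpr ⟨Tx, ?_⟩⟩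
      simp only [hV]
      rw [if_pos ⟨hTxcard, hjTx⟩]
      refine Or.inl ?_
      show gramDet (famD j Tx (bco j) A) = 0
      by_contra hne2
      have hxvan : ∀ i, i ∉ Tx → x i = 0 := by
        intro i hi
        by_contra hxi
        exact hi ((hmemTx i).mpr hxi)
      have hclaim : xstar j • (famD j Tx (bco j) A none)
          + ∑ i ∈ Tx, (-(x i)) • col A i = 0 := by
        have hfamnone : famD j Tx (bco j) A none
            = col A j - ∑ i ∈ Finset.univ.erase j, (bco j i) • col A i := rfl
        have hv : xstar j • ∑ i ∈ Finset.univ.erase j, bco j i • col A i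
            = -∑ i ∈ Finset.univ.erase j, xstar i • col A i := by
          rw [Finset.smul_sum, ← Finset.sum_neg_distrib]
          refine Finset.sum_congr rfl fun i _ => ?_
          rw [smul_smul, ← neg_smul]
          congr 1
          rw [hbco]
          field_simp
        have h5 : ∑ i ∈ Tx, (-(x i)) • col A i = -∑ i, xstar i • col A i := by
          have h6 : ∑ i ∈ Tx, (-(x i)) • col A i = ∑ i, (-(x i)) • col A i :=
            Finset.sum_subset (Finset.subset_univ _)
              (fun i _ hi => by rw [hxvan i hi, neg_zero, zero_smul])
          rw [h6, ← colEq, ← Finset.sum_neg_distrib]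
          exact Finset.sum_congr rfl fun i _ => by rw [neg_smul]
        rw [hfamnone, smul_sub, hv, sub_neg_eq_add, h5,
          Finset.add_sum_erase Finset.univ (fun i => xstar i • col A i) (Finset.mem_univ j)]
        exact add_neg_cancel _
      have hcombo := eliminate_combo hxsj hclaim
      refine not_linearIndependent_option (famD j Tx (bco j) A)
        (fun i => -(-(x i.1)) / xstar j) ?_ ((gramDet_ne_zero_iff _).mp hne2)
      rw [hcombo, ← Finset.sum_attach Tx (fun i => (-(-(x i)) / xstar j) • col A i)]
      rfl
  have h1 : P₀ Uᶜ = 1 := by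
    rw [measure_compl hUm (measure_ne_top _ _), hU0, tsub_zero, measure_univ]
  refine le_antisymm prob_le_one ?_
  rw [← h1]
  exact measure_mono hcompl
end

section
/- Let a ∈ {-1,1}^N be a random vector with i.i.d. equiprobable Bernoulli (±1) entries, and let W be a deterministic d-dimensional linear subspace of ℝ^N with 0 ≤ d < N. Then P(a ∈ W) ≤ 2^{d-N}. -/
open MeasureTheory
open scoped ENNReal

noncomputable def bernoulliPM : Measure ℝ :=
  (2 : ℝ≥0∞)⁻¹ • Measure.dirac (-1) + (2 : ℝ≥0∞)⁻¹ • Measure.dirac 1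

noncomputable def sgn (b : Bool) : ℝ := if b then 1 else -1

lemma sgn_injective : Function.Injective sgn := by
  intro a b h
  cases a <;> cases b <;> simp [sgn] at h ⊢ <;> norm_num at h

instance : IsFiniteMeasure bernoulliPM := by
  constructor
  simp [bernoulliPM]

lemma pi_bern (N : ℕ) :
    Measure.pi (fun _ : Fin N => bernoulliPM)
      = ∑ ε : Fin N → Bool, (((2 : ℝ≥0∞)⁻¹) ^ N) • Measure.dirac (fun i => sgn (ε i)) := by
  classical
  refine Measure.pi_eq fun s hs => ?_
  rw [Measure.finset_sum_apply]
  have h1 : ∀ ε : Fin N → Bool,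
      ((((2 : ℝ≥0∞)⁻¹) ^ N) • Measure.dirac (fun i => sgn (ε i))) (Set.pi Set.univ s)
        = ∏ i, (2 : ℝ≥0∞)⁻¹ * (s i).indicator 1 (sgn (ε i)) := by
    intro ε
    rw [Measure.smul_apply, Measure.dirac_apply' _ (MeasurableSet.univ_pi hs)]
    rw [Finset.prod_mul_distrib]
    simp only [Finset.prod_const, Finset.card_univ, Fintype.card_fin, smul_eq_mul]
    congr 1
    by_cases h : (fun i => sgn (ε i)) ∈ Set.pi Set.univ s
    · rw [Set.indicator_of_mem h]
      rw [Set.mem_univ_pi] at h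
      simp [Set.indicator_of_mem, h]
    · rw [Set.indicator_of_notMem h]
      rw [Set.mem_univ_pi] at h
      push_neg at h
      obtain ⟨i, hi⟩ := h
      exact (Finset.prod_eq_zero (Finset.mem_univ i) (by simp [Set.indicator_of_notMem hi])).symm
  simp only [h1]
  rw [← Fintype.prod_sum (fun i b => (2 : ℝ≥0∞)⁻¹ * (s i).indicator 1 (sgn b))]
  refine Finset.prod_congr rfl fun i _ => ?_
  rw [Fintype.sum_bool]
  simp only [bernoulliPM, Measure.add_apply, Measure.smul_apply, Measure.dirac_apply' _ (hs i),
    smul_eq_mul, mul_add, sgn, if_true, if_false, Bool.cond_true]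
  exact add_comm _ _

open Module in
open scoped Classical in
lemma card_cube (N d : ℕ) (W : Submodule ℝ (Fin N → ℝ)) (hW : Module.finrank ℝ W = d) :
    (Finset.univ.filter (fun ε : Fin N → Bool => (fun i => sgn (ε i)) ∈ W)).card ≤ 2 ^ d := by
  classical
  -- coordinate functionals on W
  set f : Fin N → Module.Dual ℝ W := fun i => (LinearMap.proj i).comp W.subtype with hf
  have hco : (Submodule.span ℝ (Set.range f)).dualCoannihilator = ⊥ := by
    rw [eq_bot_iff]
    intro w hw
    rw [Submodule.mem_dualCoannihilator] at hw
    have : ∀ i, (w : Fin N → ℝ) i = 0 := fun i =>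
      hw (f i) (Submodule.subset_span (Set.mem_range_self i))
    simp only [Submodule.mem_bot]
    ext i
    exact this i
  have hrank : finrank ℝ (Submodule.span ℝ (Set.range f)) = d := by
    have h := Subspace.finrank_add_finrank_dualCoannihilator_eq (Submodule.span ℝ (Set.range f))
    rw [hco] at h
    simpa [hW] using h
  obtain ⟨t, hts, hspan, hli⟩ := exists_linearIndependent ℝ (Set.range f)
  have htfin : t.Finite := Set.Finite.subset (Set.finite_range f) hts
  haveI : Fintype t := htfin.fintype
  have hcard : t.toFinset.card = d := by
    rw [← finrank_span_set_eq_card hli, hspan, hrank]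
  -- the injection into t → Bool
  set idx : t → Fin N := fun φ => (hts φ.2).choose with hidx
  have hidx_spec : ∀ φ : t, f (idx φ) = (φ : Module.Dual ℝ W) := fun φ => (hts φ.2).choose_spec
  have : ∀ ε₁ ∈ Finset.univ.filter (fun ε : Fin N → Bool => (fun i => sgn (ε i)) ∈ W),
      ∀ ε₂ ∈ Finset.univ.filter (fun ε : Fin N → Bool => (fun i => sgn (ε i)) ∈ W),
      (fun φ : t => ε₁ (idx φ)) = (fun φ : t => ε₂ (idx φ)) → ε₁ = ε₂ := by
    intro ε₁ h₁ ε₂ h₂ heq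
    rw [Finset.mem_filter] at h₁ h₂
    set x₁ : W := ⟨_, h₁.2⟩
    set x₂ : W := ⟨_, h₂.2⟩
    have hsub : x₁ - x₂ ∈ (Submodule.span ℝ (Set.range f)).dualCoannihilator := by
      rw [← hspan, Submodule.mem_dualCoannihilator]
      intro φ hφ
      induction hφ using Submodule.span_induction with
      | mem ψ hψ =>
        have := congrFun heq ⟨ψ, hψ⟩
        have h3 : f (idx ⟨ψ, hψ⟩) = ψ := hidx_spec ⟨ψ, hψ⟩
        rw [← h3]
        show ((x₁ - x₂ : W) : Fin N → ℝ) (idx ⟨ψ, hψ⟩) = 0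
        simp only [Submodule.coe_sub, Pi.sub_apply, x₁, x₂]
        rw [this]
        ring
      | zero => simp
      | add _ _ _ _ ha hb => simp [LinearMap.add_apply, ha, hb]
      | smul c _ _ ha => simp [LinearMap.smul_apply, ha]
    rw [hco, Submodule.mem_bot, sub_eq_zero] at hsub
    have hx : (fun i => sgn (ε₁ i)) = (fun i => sgn (ε₂ i)) := congrArg Subtype.val hsub
    funext i
    exact sgn_injective (congrFun hx i)
  calc (Finset.univ.filter (fun ε : Fin N → Bool => (fun i => sgn (ε i)) ∈ W)).card
      ≤ (Finset.univ : Finset (t → Bool)).card :=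
        Finset.card_le_card_of_injOn _ (fun _ _ => Finset.mem_univ _) this
    _ = 2 ^ d := by
        rw [Finset.card_univ, Fintype.card_fun, Fintype.card_bool, ← hcard, Set.toFinset_card]

/-- Tao–Vu lemma: a random vector with i.i.d. `±1` entries lies in a fixed
`d`-dimensional subspace `W` of `ℝ^N` (`d < N`) with probability at most `2^(d-N)`. -/
theorem stmt4 (N d : ℕ) (hdN : d < N) (W : Submodule ℝ (Fin N → ℝ))
    (hW : Module.finrank ℝ W = d) :
    (Measure.pi fun _ : Fin N => bernoulliPM) (W : Set (Fin N → ℝ))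
      ≤ (2 : ℝ≥0∞) ^ ((d : ℤ) - (N : ℤ)) := by
  classical
  have hWm : MeasurableSet (W : Set (Fin N → ℝ)) :=
    W.closed_of_finiteDimensional.measurableSet
  rw [pi_bern N, Measure.finset_sum_apply]
  have key : ∀ ε : Fin N → Bool,
      ((((2 : ℝ≥0∞)⁻¹) ^ N) • Measure.dirac (fun i => sgn (ε i))) (W : Set (Fin N → ℝ))
        = ((2 : ℝ≥0∞)⁻¹) ^ N * (if (fun i => sgn (ε i)) ∈ W then 1 else 0) := by
    intro ε
    rw [Measure.smul_apply, Measure.dirac_apply' _ hWm, smul_eq_mul, Set.indicator_apply]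
    simp
  simp only [key, ← Finset.mul_sum, Finset.sum_boole]
  have hcard := card_cube N d W hW
  have hle : ((Finset.univ.filter (fun ε : Fin N → Bool => (fun i => sgn (ε i)) ∈ W)).card : ℝ≥0∞)
      ≤ 2 ^ d := by
    exact_mod_cast Nat.cast_le.mpr hcard
  calc ((2 : ℝ≥0∞)⁻¹) ^ N *
        ((Finset.univ.filter (fun ε : Fin N → Bool => (fun i => sgn (ε i)) ∈ W)).card : ℝ≥0∞)
      ≤ ((2 : ℝ≥0∞)⁻¹) ^ N * 2 ^ d := mul_le_mul_right hle _
    _ = (2 : ℝ≥0∞) ^ ((d : ℤ) - (N : ℤ)) := by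
        rw [sub_eq_add_neg, ENNReal.zpow_add (by norm_num) (by norm_num), zpow_natCast,
          mul_comm]
        congr 1
        rw [← ENNReal.inv_pow, ← zpow_natCast (2 : ℝ≥0∞) N,
          ENNReal.zpow_neg (2 : ℝ≥0∞) (N : ℤ)]
end
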